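/- Let k divide v, 2 ≤ k ≤ v. The block set of any cyclic resolvable (v,k)-configuration is the set of all v translates of a single block X that is a (v,k)-resolvable modular Golomb ruler; in particular, the elements of X are pairwise distinct modulo k. -/

import Mathlib

/-- A symmetric (v,k)-configuration on the point set `ZMod v`: `v` blocks of size `k`,
no pair of distinct points in more than one block, every point in exactly `k` blocks. -/
def IsConfig (v k : ℕ) (B : Finset (Finset (ZMod v))) : Prop :=
  B.card = v ∧
  (∀ b ∈ B, b.card = k) ∧
  (∀ b₁ ∈ B, ∀ b₂ ∈ B, ∀ x y : ZMod v,
    x ≠ y → x ∈ b₁ → y ∈ b₁ → x ∈ b₂ → y ∈ b₂ → b₁ = b₂) ∧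
  (∀ x : ZMod v, (B.filter (fun b => x ∈ b)).card = k)

/-- A parallel class: a set of pairwise disjoint blocks whose union is the point set. -/
def IsParallelClass (v : ℕ) (P : Finset (Finset (ZMod v))) : Prop :=
  (∀ x : ZMod v, ∃ b ∈ P, x ∈ b) ∧
  (∀ b₁ ∈ P, ∀ b₂ ∈ P, b₁ ≠ b₂ → Disjoint b₁ b₂)

/-- A resolution of the block set `B` into `r` parallel classes. -/
def IsResolution (v r : ℕ) (B : Finset (Finset (ZMod v)))
    (R : Finset (Finset (Finset (ZMod v)))) : Prop :=
  R.card = r ∧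
  (∀ P ∈ R, P ⊆ B ∧ IsParallelClass v P) ∧
  (∀ b ∈ B, ∃! P, P ∈ R ∧ b ∈ P)

/-- The block set is invariant under the translation x ↦ x + 1 (mod v). -/
def CyclicBlocks (v : ℕ) (B : Finset (Finset (ZMod v))) : Prop :=
  ∀ b ∈ B, b.image (· + 1) ∈ B

/-- The resolution is invariant under the translation x ↦ x + 1 (mod v). -/
def CyclicResolution (v : ℕ) (R : Finset (Finset (Finset (ZMod v)))) : Prop :=
  ∀ P ∈ R, P.image (fun b => b.image (· + 1)) ∈ R

/-- A (v,k)-modular Golomb ruler: a k-subset of `ZMod v` whose differences of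
ordered pairs of distinct elements are pairwise distinct in `ZMod v`. -/
def IsMGR (v k : ℕ) (X : Finset (ZMod v)) : Prop :=
  X.card = k ∧
  ∀ a ∈ X, ∀ b ∈ X, ∀ c ∈ X, ∀ d ∈ X,
    a - b = c - d → (a = b ∧ c = d) ∨ (a = c ∧ b = d)

/-- A (v,k)-resolvable modular Golomb ruler: a (v,k)-MGR whose elements
(taken as their canonical representatives in {0,…,v−1}) cover all k residue
classes modulo k. -/
def IsRMGR (v k : ℕ) (X : Finset (ZMod v)) : Prop :=
  IsMGR v k X ∧ ∀ r : ZMod k, ∃ x ∈ X, ((x.val : ZMod k) = r)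

/-- The set of all v translates of X in `ZMod v`. -/
def AllTranslates (v : ℕ) (X : Finset (ZMod v)) : Finset (Finset (ZMod v)) :=
  (Finset.range v).image (fun t : ℕ => X.image (· + (t : ZMod v)))

set_option linter.unusedSectionVars false


namespace CRCaux
open Finset

variable {v : ℕ}

def tr (t : ZMod v) (b : Finset (ZMod v)) : Finset (ZMod v) := b.image (· + t)

lemma tr_tr (s t : ZMod v) (b : Finset (ZMod v)) : tr s (tr t b) = tr (t + s) b := by
  rw [tr, tr, tr, Finset.image_image]
  congr 1
  funext x
  simp [add_assoc]

lemma tr_zero (b : Finset (ZMod v)) : tr 0 b = b := by simp [tr]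

lemma card_tr (t : ZMod v) (b : Finset (ZMod v)) : (tr t b).card = b.card :=
  Finset.card_image_of_injective _ (add_left_injective t)

lemma mem_tr_of_mem {x : ZMod v} {b : Finset (ZMod v)} (t : ZMod v) (hx : x ∈ b) :
    x + t ∈ tr t b := Finset.mem_image_of_mem _ hx

section Act
variable {α : Type*} [DecidableEq α] [NeZero v]
variable (act : ZMod v → α → α)
    (hact : ∀ s t x, act s (act t x) = act (t + s) x)
    (hact0 : ∀ x, act 0 x = x)

include hact hact0

lemma act_eq_iff (u u' : ZMod v) (x : α) : act u x = act u' x ↔ act (u - u') x = x := by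
  constructor
  · intro h
    have := congrArg (act (-u')) h
    rw [hact, hact, add_neg_cancel, hact0] at this
    rwa [← sub_eq_add_neg] at this
  · intro h
    have := congrArg (act u') h
    rw [hact, sub_add_cancel] at this
    exact this

lemma stab_add {x : α} {a b : ZMod v} (ha : act a x = x) (hb : act b x = x) :
    act (a + b) x = x := by
  rw [← hact b a x, ha, hb]

lemma orbit_mul_stab (x : α) :
    (univ.image (fun u => act u x)).card * (univ.filter fun w => act w x = x).card = v := by
  classical
  have key : ∀ u u' : ZMod v, act u x = act u' x ↔ act (u - u') x = x :=
    fun u u' => act_eq_iff act hact hact0 u u' x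
  have h := Finset.card_eq_sum_card_fiberwise
    (s := (univ : Finset (ZMod v))) (t := univ.image (fun u => act u x))
    (f := fun u => act u x) (fun y _ => Finset.mem_image_of_mem _ (Finset.mem_univ y))
  have hfib : ∀ c ∈ univ.image (fun u => act u x),
      (univ.filter (fun u => act u x = c)).card = (univ.filter fun w => act w x = x).card := by
    intro c hc
    obtain ⟨u₀, -, rfl⟩ := Finset.mem_image.mp hc
    apply Finset.card_bij (fun w _ => w - u₀)
    · intro w hw
      simp only [Finset.mem_filter, Finset.mem_univ, true_and] at hw ⊢
      rw [← key]; exact hw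
    · intro a ha b hb hab
      exact sub_left_injective hab
    · intro u hu
      simp only [Finset.mem_filter, Finset.mem_univ, true_and] at hu
      refine ⟨u + u₀, ?_, by ring⟩
      simp only [Finset.mem_filter, Finset.mem_univ, true_and]
      rw [key]; simpa using hu
  rw [Finset.sum_congr rfl hfib, Finset.sum_const, smul_eq_mul] at h
  rw [← h, Finset.card_univ, ZMod.card]

lemma closed_of_step (S : α → Prop) (hS : ∀ x, S x → S (act 1 x)) :
    ∀ x, S x → ∀ t : ZMod v, S (act t x) := by
  have key : ∀ n : ℕ, ∀ x, S x → S (act (n : ZMod v) x) := by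
    intro n
    induction n with
    | zero => intro x hx; rw [Nat.cast_zero, hact0]; exact hx
    | succ m ih =>
        intro x hx
        have h1 := hS _ (ih x hx)
        rw [hact] at h1
        rwa [Nat.cast_succ]
  intro x hx t
  have := key t.val x hx
  rwa [ZMod.natCast_zmod_val] at this

end Act

lemma card_smul_eq_zero (st : Finset (ZMod v)) (hcl : ∀ a ∈ st, ∀ b ∈ st, a + b ∈ st)
    {w : ZMod v} (hw : w ∈ st) : st.card • w = 0 := by
  have himg : st.image (· + w) = st := by
    apply Finset.eq_of_subset_of_card_le
    · intro y hy
      obtain ⟨a, ha, rfl⟩ := Finset.mem_image.mp hy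
      exact hcl a ha w hw
    · rw [Finset.card_image_of_injective _ (add_left_injective w)]
  have h1 : ∑ s ∈ st, (s + w) = ∑ s ∈ st, s := by
    conv_rhs => rw [← himg]
    rw [Finset.sum_image (fun a _ b _ h => add_right_cancel h)]
  rw [Finset.sum_add_distrib, Finset.sum_const] at h1
  have := add_left_cancel (a := ∑ s ∈ st, s) (b := st.card • w) (c := 0) (by rw [add_zero]; exact h1)
  exact this

/-- The set of `w : ZMod v` with `(v/k) ∣ w.val` has at most `k` elements. -/
lemma card_dvdset_le {k : ℕ} [NeZero v] (hk : 0 < k) (hdvd : k ∣ v) :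
    (univ.filter fun w : ZMod v => (v / k) ∣ w.val).card ≤ k := by
  have hv : 0 < v := Nat.pos_of_ne_zero (NeZero.ne v)
  have hvk : 0 < v / k := Nat.div_pos (Nat.le_of_dvd hv hdvd) hk
  have hmul : v / k * k = v := Nat.div_mul_cancel hdvd
  calc (univ.filter fun w : ZMod v => (v / k) ∣ w.val).card
      ≤ (Finset.range k).card := by
        apply Finset.card_le_card_of_injOn (fun w => w.val / (v / k))
        · intro w hw
          simp only [Finset.coe_filter, Set.mem_setOf_eq, Finset.mem_univ, true_and] at hw
          rw [Finset.mem_coe, Finset.mem_range]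
          exact Nat.div_lt_of_lt_mul (by rw [hmul]; exact ZMod.val_lt w)
        · intro a ha b hb hab
          dsimp only at hab
          simp only [Finset.coe_filter, Set.mem_setOf_eq, Finset.mem_univ, true_and] at ha hb
          have ha' := Nat.div_mul_cancel ha
          have hb' := Nat.div_mul_cancel hb
          have : a.val = b.val := by
            rw [← ha', ← hb', hab]
          exact ZMod.val_injective _ this
    _ = k := Finset.card_range k

end CRCaux


namespace CRCaux2
open Finset CRCaux

variable {v k : ℕ} [NeZero v] {B : Finset (Finset (ZMod v))}

lemma smul_zero_imp_dvd (hkpos : 0 < k) (hdvd : k ∣ v) {w : ZMod v} (hw : k • w = 0) :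
    (v / k) ∣ w.val := by
  have h1 : ((k * w.val : ℕ) : ZMod v) = 0 := by
    push_cast
    rw [ZMod.natCast_zmod_val]
    simpa [nsmul_eq_mul] using hw
  have h2 : v ∣ k * w.val := (ZMod.natCast_eq_zero_iff _ _).mp h1
  have h3 : k * (v / k) ∣ k * w.val := by rwa [Nat.mul_div_cancel' hdvd]
  exact (mul_dvd_mul_iff_left (show (k:ℕ) ≠ 0 by omega)).mp h3

lemma key_coset (hk : 2 ≤ k) (hdvd : k ∣ v)
    (hsize : ∀ b ∈ B, b.card = k)
    (hpair : ∀ b₁ ∈ B, ∀ b₂ ∈ B, ∀ x y : ZMod v,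
      x ≠ y → x ∈ b₁ → y ∈ b₁ → x ∈ b₂ → y ∈ b₂ → b₁ = b₂)
    (hclosed : ∀ b ∈ B, ∀ t : ZMod v, tr t b ∈ B)
    {X : Finset (ZMod v)} (hX : X ∈ B) {t : ZMod v} (ht : t ≠ 0) (htX : tr t X = X) :
    (univ.filter fun w => tr w X = X).card = k ∧
    (univ.filter fun w => tr w X = X) = (univ.filter fun w : ZMod v => k • w = 0) ∧
    ∃ x₀, X = (univ.filter fun w => tr w X = X).image (x₀ + ·) := by
  classical
  set st := univ.filter fun w => tr w X = X with hst
  set O := univ.image (fun u => tr u X) with hO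
  have horb : O.card * st.card = v := orbit_mul_stab tr tr_tr tr_zero X
  have hOB : ∀ b ∈ O, b ∈ B := by
    intro b hb
    obtain ⟨u, -, rfl⟩ := Finset.mem_image.mp hb
    exact hclosed X hX u
  have ht_stable : ∀ b ∈ O, tr t b = b := by
    intro b hb
    obtain ⟨u, -, rfl⟩ := Finset.mem_image.mp hb
    rw [tr_tr, add_comm, ← tr_tr, htX]
  have hdisj : ∀ b₁ ∈ O, ∀ b₂ ∈ O, b₁ ≠ b₂ → Disjoint b₁ b₂ := by
    intro b₁ h₁ b₂ h₂ hne
    by_contra hd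
    obtain ⟨y, hy₁, hy₂⟩ := Finset.not_disjoint_iff.mp hd
    have hyt₁ : y + t ∈ b₁ := by rw [← ht_stable b₁ h₁]; exact mem_tr_of_mem t hy₁
    have hyt₂ : y + t ∈ b₂ := by rw [← ht_stable b₂ h₂]; exact mem_tr_of_mem t hy₂
    have hyne : y ≠ y + t := fun h => ht (left_eq_add.mp h)
    exact hne (hpair b₁ (hOB b₁ h₁) b₂ (hOB b₂ h₂) y (y + t) hyne hy₁ hyt₁ hy₂ hyt₂)
  have hbu : (O.biUnion (fun b => b)).card = O.card * k := by
    rw [Finset.card_biUnion (fun b hb b' hb' hne => hdisj b hb b' hb' hne)]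
    rw [Finset.sum_congr rfl (fun b hb => hsize b (hOB b hb))]
    rw [Finset.sum_const, smul_eq_mul]
  have hle : O.card * k ≤ v := by
    rw [← hbu]
    calc (O.biUnion (fun b => b)).card ≤ Fintype.card (ZMod v) := Finset.card_le_univ _
      _ = v := ZMod.card v
  have hOpos : 0 < O.card := by
    apply Finset.card_pos.mpr
    exact ⟨tr 0 X, Finset.mem_image_of_mem _ (Finset.mem_univ 0)⟩
  have hk_le : k ≤ st.card := by
    have : O.card * k ≤ O.card * st.card := by rw [horb]; exact hle
    exact Nat.le_of_mul_le_mul_left this hOpos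
  obtain ⟨x₀, hx₀⟩ : X.Nonempty := by
    apply Finset.card_pos.mp
    rw [hsize X hX]; omega
  have himsub : st.image (x₀ + ·) ⊆ X := by
    intro y hy
    obtain ⟨w, hw, rfl⟩ := Finset.mem_image.mp hy
    have hw' : tr w X = X := (Finset.mem_filter.mp hw).2
    rw [← hw']
    exact mem_tr_of_mem w hx₀
  have hst_le : st.card ≤ k := by
    calc st.card = (st.image (x₀ + ·)).card :=
          (Finset.card_image_of_injective _ (add_right_injective x₀)).symm
      _ ≤ X.card := Finset.card_le_card himsub
      _ = k := hsize X hX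
  have hstk : st.card = k := le_antisymm hst_le hk_le
  have hstcl : ∀ a ∈ st, ∀ b ∈ st, a + b ∈ st := by
    intro a ha b hb
    simp only [hst, Finset.mem_filter, Finset.mem_univ, true_and] at ha hb ⊢
    exact stab_add tr tr_tr tr_zero ha hb
  have hsmul : ∀ w ∈ st, k • w = 0 := by
    intro w hw
    have := card_smul_eq_zero st hstcl hw
    rwa [hstk] at this
  refine ⟨hstk, ?_, x₀, ?_⟩
  · apply Finset.eq_of_subset_of_card_le
    · intro w hw
      simp only [Finset.mem_filter, Finset.mem_univ, true_and]
      exact hsmul w hw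
    · calc (univ.filter fun w : ZMod v => k • w = 0).card
          ≤ (univ.filter fun w : ZMod v => (v / k) ∣ w.val).card := by
            apply Finset.card_le_card
            intro w hw
            simp only [Finset.mem_filter, Finset.mem_univ, true_and] at hw ⊢
            exact smul_zero_imp_dvd (by omega) hdvd hw
      _ ≤ k := card_dvdset_le (by omega) hdvd
      _ = st.card := hstk.symm
  · symm
    apply Finset.eq_of_subset_of_card_le himsub
    rw [Finset.card_image_of_injective _ (add_right_injective x₀), hstk, hsize X hX]

lemma tr_image (t x₀ : ZMod v) (s : Finset (ZMod v)) :
    tr t (s.image (x₀ + ·)) = s.image ((x₀ + t) + ·) := by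
  rw [tr, Finset.image_image]
  congr 1
  funext w
  simp only [Function.comp_apply]
  ring

lemma stab_trivial (hk : 2 ≤ k) (hdvd : k ∣ v)
    (hBcard : B.card = v)
    (hsize : ∀ b ∈ B, b.card = k)
    (hpair : ∀ b₁ ∈ B, ∀ b₂ ∈ B, ∀ x y : ZMod v,
      x ≠ y → x ∈ b₁ → y ∈ b₁ → x ∈ b₂ → y ∈ b₂ → b₁ = b₂)
    (hclosed : ∀ b ∈ B, ∀ t : ZMod v, tr t b ∈ B) :
    ∀ X ∈ B, ∀ w : ZMod v, tr w X = X → w = 0 := by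
  classical
  intro X hX w hw
  by_contra hne
  obtain ⟨hstk, hstX, x₀, hXco⟩ := key_coset hk hdvd hsize hpair hclosed hX hne hw
  set st := univ.filter fun u => tr u X = X with hstdef
  set O := univ.image (fun u => tr u X) with hO
  have horb : O.card * st.card = v := orbit_mul_stab tr tr_tr tr_zero X
  have hOB : O ⊆ B := by
    intro b hb
    obtain ⟨u, -, rfl⟩ := Finset.mem_image.mp hb
    exact hclosed X hX u
  have hOpos : 0 < O.card := by
    apply Finset.card_pos.mpr
    exact ⟨tr 0 X, Finset.mem_image_of_mem _ (Finset.mem_univ 0)⟩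
  have hOlt : O.card < v := by
    have h2 : O.card * 2 ≤ O.card * k := Nat.mul_le_mul_left _ hk
    have hv : O.card * k = v := by rw [← hstk]; exact horb
    omega
  have : ¬ (B ⊆ O) := by
    intro h
    have := Finset.card_le_card h
    omega
  obtain ⟨Y, hYB, hYO⟩ := Finset.not_subset.mp this
  by_cases hY : ∀ w', tr w' Y = Y → w' = 0
  · -- Y has trivial stabilizer, orbit of Y has v elements, disjoint from O : contradiction
    have hstY : (univ.filter fun u => tr u Y = Y) = {0} := by
      ext u
      simp only [Finset.mem_filter, Finset.mem_univ, true_and, Finset.mem_singleton]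
      constructor
      · exact hY u
      · rintro rfl; exact tr_zero Y
    have horbY := orbit_mul_stab tr tr_tr tr_zero Y
    rw [hstY, Finset.card_singleton, mul_one] at horbY
    set OY := univ.image (fun u => tr u Y) with hOY
    have hOYB : OY ⊆ B := by
      intro b hb
      obtain ⟨u, -, rfl⟩ := Finset.mem_image.mp hb
      exact hclosed Y hYB u
    have hdisjOY : Disjoint OY O := by
      rw [Finset.disjoint_left]
      intro b hb1 hb2
      obtain ⟨a, -, ha⟩ := Finset.mem_image.mp hb1
      obtain ⟨c, -, hc⟩ := Finset.mem_image.mp hb2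
      apply hYO
      have : tr (-a) (tr a Y) = tr (-a) (tr c X) := by rw [ha, hc]
      rw [tr_tr, tr_tr, add_neg_cancel, tr_zero] at this
      rw [this]
      exact Finset.mem_image_of_mem _ (Finset.mem_univ _)
    have hcard := Finset.card_le_card (Finset.union_subset hOYB hOB)
    rw [Finset.card_union_of_disjoint hdisjOY, horbY, hBcard] at hcard
    omega
  · push_neg at hY
    obtain ⟨w', hw', hw'0⟩ := hY
    obtain ⟨-, hstY, y₀, hYco⟩ := key_coset hk hdvd hsize hpair hclosed hYB hw'0 hw'
    apply hYO
    have : tr (y₀ - x₀) X = Y := by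
      rw [hXco, tr_image, hstX, ← hstY]
      have hfun : ((univ : Finset (ZMod v)).filter fun u => tr u Y = Y).image ((x₀ + (y₀ - x₀)) + ·)
          = ((univ : Finset (ZMod v)).filter fun u => tr u Y = Y).image (y₀ + ·) := by
        congr 1
        funext x
        ring
      rw [hfun]
      exact hYco.symm
    rw [← this]
    exact Finset.mem_image_of_mem _ (Finset.mem_univ _)

def actR {v : ℕ} (t : ZMod v) (P : Finset (Finset (ZMod v))) : Finset (Finset (ZMod v)) :=
  P.image (tr t)

lemma actR_actR (s t : ZMod v) (P : Finset (Finset (ZMod v))) :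
    actR s (actR t P) = actR (t + s) P := by
  rw [actR, actR, actR, Finset.image_image]
  congr 1
  funext b
  simp only [Function.comp_apply]
  exact tr_tr s t b

lemma actR_zero (P : Finset (Finset (ZMod v))) : actR (0 : ZMod v) P = P := by
  rw [actR, show tr (0 : ZMod v) = id from funext tr_zero, Finset.image_id]

end CRCaux2


open Finset CRCaux CRCaux2 in
/-- The block set of any cyclic resolvable (v,k)-configuration (k ∣ v, 2 ≤ k ≤ v) is
the set of all v translates of a single block X that is a (v,k)-resolvable modular
Golomb ruler; in particular, the elements of X are pairwise distinct modulo k. -/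
theorem cyclic_resolvable_config_gives_RMGR (v k : ℕ) (hk : 2 ≤ k) (hkv : k ≤ v)
    (hdvd : k ∣ v) (B : Finset (Finset (ZMod v)))
    (R : Finset (Finset (Finset (ZMod v))))
    (hB : IsConfig v k B) (hR : IsResolution v k B R)
    (hcyc : CyclicResolution v R) :
    ∃ X ∈ B, IsRMGR v k X ∧ B = AllTranslates v X ∧
      (∀ x ∈ X, ∀ y ∈ X, x ≠ y → ((x.val : ZMod k) ≠ (y.val : ZMod k))) := by
  classical
  haveI : NeZero v := ⟨by omega⟩
  haveI : NeZero k := ⟨by omega⟩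
  obtain ⟨hBcard, hsize, hpair, hdeg⟩ := hB
  obtain ⟨hRcard, hRclass, hRuniq⟩ := hR
  have hstep : ∀ b, b ∈ B → tr 1 b ∈ B := by
    intro b hb
    obtain ⟨P, ⟨hPR, hbP⟩, -⟩ := hRuniq b hb
    have h1 : P.image (fun b => b.image (· + 1)) ∈ R := hcyc P hPR
    exact (hRclass _ h1).1 (Finset.mem_image_of_mem _ hbP)
  have hclosed : ∀ b ∈ B, ∀ t : ZMod v, tr t b ∈ B :=
    closed_of_step tr tr_tr tr_zero (· ∈ B) hstep
  have htriv := stab_trivial hk hdvd hBcard hsize hpair hclosed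
  have hBne : B.Nonempty := by rw [← Finset.card_pos, hBcard]; omega
  obtain ⟨X, hX⟩ := hBne
  -- B is the orbit of X
  have horb : (univ.image fun u => tr u X).card * (univ.filter fun w => tr w X = X).card = v :=
    orbit_mul_stab tr tr_tr tr_zero X
  have hstX : (univ.filter fun w => tr w X = X) = {0} := by
    ext u
    simp only [Finset.mem_filter, Finset.mem_univ, true_and, Finset.mem_singleton]
    exact ⟨htriv X hX u, fun h => h ▸ tr_zero X⟩
  rw [hstX, Finset.card_singleton, mul_one] at horb
  have hOsubB : (univ.image fun u => tr u X) ⊆ B := by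
    intro b hb
    obtain ⟨u, -, rfl⟩ := Finset.mem_image.mp hb
    exact hclosed X hX u
  have hBO : B = univ.image (fun u => tr u X) :=
    (Finset.eq_of_subset_of_card_le hOsubB (by rw [hBcard, horb])).symm
  -- B = AllTranslates v X
  have hAT : B = AllTranslates v X := by
    rw [hBO]
    apply Finset.Subset.antisymm
    · intro b hb
      obtain ⟨u, -, rfl⟩ := Finset.mem_image.mp hb
      apply Finset.mem_image.mpr
      refine ⟨u.val, Finset.mem_range.mpr (ZMod.val_lt u), ?_⟩
      show X.image (· + ((u.val : ℕ) : ZMod v)) = tr u X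
      rw [ZMod.natCast_zmod_val]
      rfl
    · intro b hb
      obtain ⟨n, -, rfl⟩ := Finset.mem_image.mp hb
      exact Finset.mem_image_of_mem _ (Finset.mem_univ ((n : ZMod v)))
  -- X is a MGR
  have hMGR : IsMGR v k X := by
    refine ⟨hsize X hX, ?_⟩
    intro a ha b hb c hc d hd habcd
    by_cases hab : a = b
    · exact Or.inl ⟨hab, by rwa [hab, sub_self, eq_comm, sub_eq_zero] at habcd⟩
    · right
      have hmem1 : a ∈ tr (a - c) X := by
        have h1 := mem_tr_of_mem (a - c) hc
        rwa [show c + (a - c) = a from by ring] at h1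
      have hmem2 : b ∈ tr (a - c) X := by
        have h1 := mem_tr_of_mem (a - c) hd
        rwa [show d + (a - c) = b from by linear_combination habcd] at h1
      have hXX : X = tr (a - c) X :=
        hpair X hX _ (hclosed X hX _) a b hab ha hb hmem1 hmem2
      have hac : a = c := sub_eq_zero.mp (htriv X hX _ hXX.symm)
      refine ⟨hac, ?_⟩
      rw [hac] at habcd
      exact (sub_right_inj.mp habcd)
  -- resolution part
  have hRstep : ∀ P, P ∈ R → actR 1 P ∈ R := by
    intro P hP
    exact hcyc P hP
  have hRclosed : ∀ P, P ∈ R → ∀ t : ZMod v, actR t P ∈ R :=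
    closed_of_step actR actR_actR actR_zero (· ∈ R) hRstep
  obtain ⟨P, ⟨hPR, hXP⟩, -⟩ := hRuniq X hX
  have horbP : (univ.image fun u => actR u P).card * (univ.filter fun w => actR w P = P).card = v :=
    orbit_mul_stab actR actR_actR actR_zero P
  set stP := univ.filter (fun w : ZMod v => actR w P = P) with hstPdef
  have himgP_le : (univ.image fun u => actR u P).card ≤ k := by
    rw [← hRcard]
    apply Finset.card_le_card
    intro Q hQ
    obtain ⟨u, -, rfl⟩ := Finset.mem_image.mp hQ
    exact hRclosed P hPR u
  have hblk : ∀ w ∈ stP, tr w X ∈ P := by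
    intro w hw
    have h2 : actR w P = P := (Finset.mem_filter.mp hw).2
    rw [← h2]
    exact Finset.mem_image_of_mem _ hXP
  have hPclass := (hRclass P hPR).2
  have hdisjP : ∀ w ∈ stP, ∀ w' ∈ stP, w ≠ w' → Disjoint (tr w X) (tr w' X) := by
    intro w hw w' hw' hne
    apply hPclass.2 _ (hblk w hw) _ (hblk w' hw')
    intro heq
    apply hne
    have h3 : tr (w - w') X = X := (act_eq_iff tr tr_tr tr_zero w w' X).mp heq
    have := htriv X hX _ h3
    exact sub_eq_zero.mp this
  have hbu : (stP.biUnion fun w => tr w X).card = stP.card * k := by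
    rw [Finset.card_biUnion hdisjP]
    rw [Finset.sum_congr rfl (fun w _ => by rw [card_tr, hsize X hX])]
    rw [Finset.sum_const, smul_eq_mul]
  have hle1 : stP.card * k ≤ v := by
    rw [← hbu]
    calc (stP.biUnion fun w => tr w X).card ≤ Fintype.card (ZMod v) := Finset.card_le_univ _
      _ = v := ZMod.card v
  have hge1 : v ≤ stP.card * k := by
    calc v = (univ.image fun u => actR u P).card * stP.card := horbP.symm
      _ ≤ k * stP.card := Nat.mul_le_mul_right _ himgP_le
      _ = stP.card * k := mul_comm _ _
  have hstPk : stP.card * k = v := le_antisymm hle1 hge1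
  have hcov : stP.biUnion (fun w => tr w X) = univ := by
    apply Finset.eq_univ_of_card
    rw [hbu, hstPk, ZMod.card]
  have hstPcl : ∀ a ∈ stP, ∀ b ∈ stP, a + b ∈ stP := by
    intro a ha b hb
    simp only [hstPdef, Finset.mem_filter, Finset.mem_univ, true_and] at ha hb ⊢
    exact stab_add actR actR_actR actR_zero ha hb
  have hstPpos : 0 < stP.card := by
    apply Finset.card_pos.mpr
    refine ⟨0, ?_⟩
    simp only [hstPdef, Finset.mem_filter, Finset.mem_univ, true_and]
    exact actR_zero P
  have hkdvd : ∀ w ∈ stP, k ∣ w.val := by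
    intro w hw
    have h1 := card_smul_eq_zero stP hstPcl hw
    have h2 : ((stP.card * w.val : ℕ) : ZMod v) = 0 := by
      push_cast
      rw [ZMod.natCast_zmod_val]
      simpa [nsmul_eq_mul] using h1
    have h3 : v ∣ stP.card * w.val := (ZMod.natCast_eq_zero_iff _ _).mp h2
    have h4 : stP.card * k ∣ stP.card * w.val := by rw [hstPk]; exact h3
    exact (mul_dvd_mul_iff_left (show (stP.card : ℕ) ≠ 0 by omega)).mp h4
  have hres : ∀ r : ZMod k, ∃ x ∈ X, ((x.val : ZMod k) = r) := by
    intro r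
    set y : ZMod v := ((r.val : ℕ) : ZMod v) with hy
    have hyin : y ∈ stP.biUnion (fun w => tr w X) := hcov ▸ Finset.mem_univ y
    obtain ⟨w, hw, hyw⟩ := Finset.mem_biUnion.mp hyin
    obtain ⟨x, hxX, hxy⟩ := Finset.mem_image.mp hyw
    refine ⟨x, hxX, ?_⟩
    have hkw : k ∣ w.val := hkdvd w hw
    have hval : y.val = (x.val + w.val) % v := by rw [← hxy]; exact ZMod.val_add x w
    have h5 : ((y.val : ℕ) : ZMod k) = ((x.val + w.val : ℕ) : ZMod k) := by
      rw [hval]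
      conv_rhs => rw [← Nat.mod_add_div (x.val + w.val) v]
      push_cast
      rw [(ZMod.natCast_eq_zero_iff v k).mpr hdvd]
      ring
    have h6 : ((y.val : ℕ) : ZMod k) = r := by
      rw [hy, ZMod.val_cast_of_lt (lt_of_lt_of_le (ZMod.val_lt r) hkv)]
      exact ZMod.natCast_zmod_val r
    have h7 : ((x.val + w.val : ℕ) : ZMod k) = ((x.val : ℕ) : ZMod k) := by
      push_cast
      rw [(ZMod.natCast_eq_zero_iff w.val k).mpr hkw, add_zero]
    rw [← h7, ← h5]
    exact h6
  have hinj : ∀ x ∈ X, ∀ y ∈ X, x ≠ y → ((x.val : ZMod k) ≠ (y.val : ZMod k)) := by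
    have himg : X.image (fun x : ZMod v => ((x.val : ℕ) : ZMod k)) = (univ : Finset (ZMod k)) := by
      apply Finset.eq_univ_of_forall
      intro r
      obtain ⟨x, hxX, hxr⟩ := hres r
      exact Finset.mem_image.mpr ⟨x, hxX, hxr⟩
    have hinjOn : Set.InjOn (fun x : ZMod v => ((x.val : ℕ) : ZMod k)) X := by
      apply Finset.injOn_of_card_image_eq
      rw [himg, Finset.card_univ, ZMod.card, hsize X hX]
    intro x hx y hy hne heq
    exact hne (hinjOn hx hy heq)
  exact ⟨X, hX, ⟨hMGR, hres⟩, hAT, hinj⟩
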